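/- Let ψ₁,…,ψ_N be pairwise distinct reals, γ ∈ ℝ^N, and j ≥ 1. If ∑_{i=1}^N γ_i σ(y+ψ_i)^j = 0 for all y ∈ ℝ, then ∑_{i=1}^N γ_i σ(y+ψ_i)^{j+1} = 0 for all y ∈ ℝ. -/

import Mathlib

noncomputable def sigmoid : ℝ → ℝ := fun x => 1 / (1 + Real.exp (-x))

lemma hasDerivAt_sigmoid (x : ℝ) :
    HasDerivAt sigmoid (sigmoid x * (1 - sigmoid x)) x := by
  have hpos : 0 < 1 + Real.exp (-x) := by positivity
  have h1 : HasDerivAt (fun y : ℝ => 1 + Real.exp (-y)) (-Real.exp (-x)) x := by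
    simpa using ((Real.hasDerivAt_exp (-x)).comp x (hasDerivAt_neg x)).const_add 1
  have h2 := h1.inv (ne_of_gt hpos)
  have heq : -(-Real.exp (-x)) / (1 + Real.exp (-x)) ^ 2
      = sigmoid x * (1 - sigmoid x) := by
    have h3 : (1 : ℝ) - sigmoid x = Real.exp (-x) / (1 + Real.exp (-x)) := by
      field_simp [sigmoid]
      simp only [sigmoid]
      field_simp
      ring
    rw [h3]
    simp only [sigmoid]
    field_simp
  have : HasDerivAt (fun y : ℝ => (1 + Real.exp (-y))⁻¹)
      (sigmoid x * (1 - sigmoid x)) x := heq ▸ h2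
  have final : HasDerivAt (fun y : ℝ => 1 / (1 + Real.exp (-y)))
      (sigmoid x * (1 - sigmoid x)) x := by simpa [one_div] using this
  exact final

theorem sigmoid_power_identity_step {N : ℕ} (ψ : Fin N → ℝ) (γ : Fin N → ℝ)
    (j : ℕ) (hj : 1 ≤ j)
    (h : ∀ y : ℝ, ∑ i, γ i * (sigmoid (y + ψ i)) ^ j = 0) :
    ∀ y : ℝ, ∑ i, γ i * (sigmoid (y + ψ i)) ^ (j + 1) = 0 := by
  obtain ⟨k, rfl⟩ : ∃ k, j = k + 1 := ⟨j - 1, (Nat.succ_pred_eq_of_pos hj).symm⟩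
  intro y
  set s : Fin N → ℝ := fun i => sigmoid (y + ψ i) with hs
  have hd : HasDerivAt (fun y : ℝ => ∑ i, γ i * (sigmoid (y + ψ i)) ^ (k + 1))
      (∑ i, γ i * ((k + 1 : ℝ) * s i ^ k * (s i * (1 - s i)))) y := by
    apply HasDerivAt.fun_sum
    intro i _
    have h1 : HasDerivAt (fun y : ℝ => sigmoid (y + ψ i)) (s i * (1 - s i)) y := by
      have h' := (hasDerivAt_sigmoid (y + ψ i)).comp y ((hasDerivAt_id y).add_const (ψ i))
      simp only [mul_one] at h'
      exact h'
    have := (h1.pow (k + 1)).const_mul (γ i)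
    simpa [mul_comm, mul_assoc, mul_left_comm] using this
  have hzero : HasDerivAt (fun y : ℝ => ∑ i, γ i * (sigmoid (y + ψ i)) ^ (k + 1)) 0 y := by
    have hfun : (fun y : ℝ => ∑ i, γ i * (sigmoid (y + ψ i)) ^ (k + 1)) = fun _ => (0 : ℝ) :=
      funext h
    rw [hfun]; exact hasDerivAt_const y 0
  have hD : (∑ i, γ i * ((k + 1 : ℝ) * s i ^ k * (s i * (1 - s i)))) = 0 :=
    hd.unique hzero
  have key : ∑ i, γ i * ((k + 1 : ℝ) * s i ^ k * (s i * (1 - s i)))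
      = (k + 1 : ℝ) * (∑ i, γ i * s i ^ (k + 1)) - (k + 1 : ℝ) * ∑ i, γ i * s i ^ (k + 2) := by
    rw [Finset.mul_sum, Finset.mul_sum, ← Finset.sum_sub_distrib]
    apply Finset.sum_congr rfl
    intro i _
    ring
  have h1 := h y
  rw [key] at hD
  have : (k + 1 : ℝ) * ∑ i, γ i * s i ^ (k + 2) = 0 := by
    simp only [hs] at h1 ⊢
    rw [h1, mul_zero] at hD
    linarith
  have hk : (k + 1 : ℝ) ≠ 0 := by positivity
  have := mul_eq_zero.mp this
  simpa [hk, hs, show k + 1 + 1 = k + 2 from rfl] using this
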